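/- Let f : (C^n,0) → (C^p,0) be a finite holomorphic map germ with corank f = k ≥ 2 and n ≤ p. Then the embedding dimension of the double point space D^2(f) = V(I^2(f)) is n + k. -/

import Mathlib

open Filter Topology

/-- The local ring of germs at `z` of complex-analytic functions, as a subring of the
ring of germs of all functions at `z`. -/
noncomputable def analyticGerms (E : Type*) [NormedAddCommGroup E] [NormedSpace ℂ E]
    (z : E) : Subring (Filter.Germ (nhds z) ℂ) where
  carrier := {γ | ∃ g : E → ℂ, AnalyticAt ℂ g z ∧ γ = (g : Filter.Germ (nhds z) ℂ)}
  mul_mem' := by rintro a b ⟨g, hg, rfl⟩ ⟨h, hh, rfl⟩; exact ⟨g * h, hg.mul hh, rfl⟩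
  one_mem' := ⟨1, analyticAt_const, rfl⟩
  add_mem' := by rintro a b ⟨g, hg, rfl⟩ ⟨h, hh, rfl⟩; exact ⟨g + h, hg.add hh, rfl⟩
  zero_mem' := ⟨0, analyticAt_const, rfl⟩
  neg_mem' := by rintro a ⟨g, hg, rfl⟩; exact ⟨-g, hg.neg, rfl⟩

/-- Mond's double point ideal `I²(f)` in the local ring `O_{2n}` of holomorphic germs at
the origin of `ℂⁿ × ℂⁿ`, formed from a matrix `α` with `f(x)-f(x') = α(x,x')(x-x')`:
it is generated by the germs of the components `fⱼ(x) - fⱼ(x')` together with the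
`n × n` minors of `α`. -/
noncomputable def mondDoubleIdeal (n p : ℕ) (f : (Fin n → ℂ) → (Fin p → ℂ))
    (α : Fin p → Fin n → ((Fin n → ℂ) × (Fin n → ℂ)) → ℂ) :
    Ideal (analyticGerms ((Fin n → ℂ) × (Fin n → ℂ)) (0, 0)) :=
  Ideal.span
    ({γ | ∃ j : Fin p, (γ : Filter.Germ (nhds ((0, 0) : (Fin n → ℂ) × (Fin n → ℂ))) ℂ)
          = ((fun w : (Fin n → ℂ) × (Fin n → ℂ) => f w.1 j - f w.2 j) : Filter.Germ (nhds ((0, 0) : (Fin n → ℂ) × (Fin n → ℂ))) ℂ)}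
      ∪ {γ | ∃ rows : Fin n → Fin p, StrictMono rows ∧
          (γ : Filter.Germ (nhds ((0, 0) : (Fin n → ℂ) × (Fin n → ℂ))) ℂ)
          = ((fun w : (Fin n → ℂ) × (Fin n → ℂ) => (Matrix.of fun i i' : Fin n => α (rows i) i' w).det) :
              Filter.Germ (nhds ((0, 0) : (Fin n → ℂ) × (Fin n → ℂ))) ℂ)})


/-- The space of linear parts at the origin of the elements of an ideal `I` of the ring
`O_{2n}` of analytic germs: the span of the differentials at the base point of analytic
representatives of members of `I`. The embedding dimension of `V(I)` is `2n` minus its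
dimension. -/
noncomputable def linearParts (n : ℕ)
    (I : Ideal (analyticGerms ((Fin n → ℂ) × (Fin n → ℂ)) (0, 0))) :
    Submodule ℂ (((Fin n → ℂ) × (Fin n → ℂ)) →L[ℂ] ℂ) :=
  Submodule.span ℂ {L | ∃ γ ∈ I, ∃ g : ((Fin n → ℂ) × (Fin n → ℂ)) → ℂ,
    AnalyticAt ℂ g (0, 0) ∧
    (γ : Filter.Germ (nhds ((0, 0) : (Fin n → ℂ) × (Fin n → ℂ))) ℂ)
      = (g : Filter.Germ (nhds ((0, 0) : (Fin n → ℂ) × (Fin n → ℂ))) ℂ) ∧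
    L = fderiv ℂ g (0, 0)}

section AuxLemmas

open Matrix

lemma aux_sum_mul_single {n : ℕ} (c : Fin n → ℂ) (l : Fin n) :
    ∑ i, c i * (Pi.single l 1 : Fin n → ℂ) i = c l := by
  rw [Finset.sum_eq_single l]
  · simp
  · intro b _ hb; simp [Pi.single_eq_of_ne hb]
  · simp

lemma aux_apply_eq_sum_single {n p : ℕ} (T : (Fin n → ℂ) →L[ℂ] (Fin p → ℂ)) (v : Fin n → ℂ)
    (j : Fin p) : T v j = ∑ i, v i * T (Pi.single i 1) j := by
  have hv : v = ∑ i, v i • (Pi.single i 1 : Fin n → ℂ) := by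
    funext l
    rw [Finset.sum_apply]
    symm
    have h1 : ∀ i : Fin n, i ∈ Finset.univ →
        (v i • (Pi.single i 1 : Fin n → ℂ)) l = v i * (Pi.single l 1 : Fin n → ℂ) i := by
      intro i _
      rcases eq_or_ne i l with rfl | h
      · simp
      · simp [Pi.single_eq_of_ne h, Pi.single_eq_of_ne (Ne.symm h)]
    rw [Finset.sum_congr rfl h1, aux_sum_mul_single]
  conv_lhs => rw [hv]
  rw [map_sum]
  rw [Finset.sum_apply]
  apply Finset.sum_congr rfl
  intro i _
  rw [T.map_smul]
  simp

lemma aux_det_eq_zero_of_rows {n : ℕ} (M : Matrix (Fin n) (Fin n) ℂ)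
    (W : Submodule ℂ (Fin n → ℂ)) (i : Fin n) (hW : ∀ l, l ≠ i → M l ∈ W)
    (hd : Module.finrank ℂ W + 1 < n) : M.det = 0 := by
  rw [← Matrix.exists_vecMul_eq_zero_iff]
  have hcard : Fintype.card {l : Fin n // l ≠ i} = n - 1 := by
    simp [Fintype.card_subtype_compl]
  have hdep : ¬ LinearIndependent ℂ (fun l : {l : Fin n // l ≠ i} => (⟨M l, hW l l.2⟩ : W)) := by
    intro h
    have := h.fintype_card_le_finrank
    rw [hcard] at this
    omega
  obtain ⟨g, hg0, l0, hl0⟩ := Fintype.not_linearIndependent_iff.mp hdep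
  refine ⟨fun l => if h : l = i then 0 else g ⟨l, h⟩, ?_, ?_⟩
  · intro h0
    apply hl0
    have := congrFun h0 l0.1
    simpa [l0.2] using this
  · have h2 : ∑ l : {l : Fin n // l ≠ i}, g l • M l.1 = 0 := by
      have := congrArg (Submodule.subtype W) hg0
      simpa using this
    funext c
    have h3 : ∑ l : {l : Fin n // l ≠ i}, g l * M l.1 c = 0 := by
      have := congrFun h2 c
      simpa using this
    have h4 : ∀ v : Fin n → ℂ, (Matrix.vecMul v M) c = ∑ l, v l * M l c := by
      intro v; simp [Matrix.vecMul, dotProduct]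
    rw [Pi.zero_apply, h4]
    rw [← Finset.sum_erase_add _ _ (Finset.mem_univ i)]
    rw [dif_pos rfl, zero_mul, add_zero]
    rw [Finset.sum_subtype (p := fun l => l ≠ i) (Finset.univ.erase i) (fun x => by simp)
      (fun l => (if h : l = i then 0 else g ⟨l, h⟩) * M l c)]
    rw [← h3]
    apply Finset.sum_congr rfl
    intro l _
    rw [dif_neg l.2]

lemma aux_fderiv_prod_zero {E : Type*} [NormedAddCommGroup E] [NormedSpace ℂ E] {ι : Type*}
    [Fintype ι] [DecidableEq ι] (v : ι → E → ℂ) {x : E} (hv : ∀ i, AnalyticAt ℂ (v i) x)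
    {i₁ i₂ : ι} (h12 : i₁ ≠ i₂) (h1 : v i₁ x = 0) (h2 : v i₂ x = 0) :
    fderiv ℂ (fun w => ∏ i, v i w) x = 0 := by
  have hu : AnalyticAt ℂ (fun w => ∏ i ∈ Finset.univ.erase i₁, v i w) x :=
    Finset.analyticAt_fun_prod _ (fun i _ => hv i)
  have key : (fun w => ∏ i, v i w) = fun w => v i₁ w * ∏ i ∈ Finset.univ.erase i₁, v i w := by
    funext w; exact (Finset.mul_prod_erase _ _ (Finset.mem_univ i₁)).symm
  have hz : ∏ i ∈ Finset.univ.erase i₁, v i x = 0 :=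
    Finset.prod_eq_zero (Finset.mem_erase.mpr ⟨Ne.symm h12, Finset.mem_univ i₂⟩) h2
  rw [key, fderiv_fun_mul (hv i₁).differentiableAt hu.differentiableAt, h1, hz]
  ext y; simp

lemma aux_analyticAt_det {q : ℕ} {E : Type*} [NormedAddCommGroup E] [NormedSpace ℂ E]
    (M : Fin q → Fin q → E → ℂ) {x : E} (h : ∀ i j, AnalyticAt ℂ (M i j) x) :
    AnalyticAt ℂ (fun w => (Matrix.of fun i j => M i j w).det) x := by
  have hdet : (fun w => (Matrix.of fun i j => M i j w).det)
      = fun w => ∑ σ : Equiv.Perm (Fin q), ((Equiv.Perm.sign σ : ℤ) : ℂ) * ∏ i, M (σ i) i w := by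
    funext w; rw [Matrix.det_apply']; rfl
  rw [hdet]
  exact Finset.analyticAt_fun_sum _ fun σ _ =>
    analyticAt_const.mul (Finset.analyticAt_fun_prod _ fun i _ => h (σ i) i)

lemma aux_fderiv_det_zero {n : ℕ} {E : Type*} [NormedAddCommGroup E] [NormedSpace ℂ E] {x : E}
    (M : Fin n → Fin n → E → ℂ) (hM : ∀ i j, AnalyticAt ℂ (M i j) x)
    (W : Submodule ℂ (Fin n → ℂ)) (hd : Module.finrank ℂ W + 2 ≤ n)
    (hrow : ∀ i, (fun j => M i j x) ∈ W) :
    fderiv ℂ (fun w => (Matrix.of fun i j => M i j w).det) x = 0 := by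
  set N0 : Fin n → Fin n → ℂ := fun i j => M i j x with hN0
  set hs : Finset (Fin n) → E → ℂ :=
    fun s w => (Matrix.of fun i j => if i ∈ s then M i j w - N0 i j else N0 i j).det with hhs
  have hexp : (fun w => (Matrix.of fun i j => M i j w).det)
      = fun w => ∑ s : Finset (Fin n), hs s w := by
    funext w
    calc (Matrix.of fun i j => M i j w).det
        = Matrix.detRowAlternating ((fun i j => M i j w - N0 i j) + N0) := by
          rw [show ((fun i j => M i j w - N0 i j) + N0) = fun i j => M i j w from by
            funext i j; simp]
          rfl
      _ = ∑ s : Finset (Fin n),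
            Matrix.detRowAlternating (s.piecewise (fun i j => M i j w - N0 i j) N0) :=
          Matrix.detRowAlternating.toMultilinearMap.map_add_univ _ _
      _ = ∑ s : Finset (Fin n), hs s w := by
          apply Finset.sum_congr rfl
          intro s _
          have : s.piecewise (fun i j => M i j w - N0 i j) N0
              = fun i j => if i ∈ s then M i j w - N0 i j else N0 i j := by
            funext i j
            by_cases h : i ∈ s <;> simp [Finset.piecewise, h]
          rw [this]
          rfl
  have hana : ∀ s : Finset (Fin n), AnalyticAt ℂ (hs s) x := by
    intro s
    apply aux_analyticAt_det
    intro i j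
    by_cases h : i ∈ s
    · simpa [h] using (show AnalyticAt ℂ (fun w => M i j w - N0 i j) x from (hM i j).sub analyticAt_const)
    · simpa [h] using (analyticAt_const : AnalyticAt ℂ (fun _ : E => N0 i j) x)
  have hzero : ∀ s : Finset (Fin n), fderiv ℂ (hs s) x = 0 := by
    intro s
    rcases Nat.lt_or_ge s.card 2 with hc | hc
    · rcases Nat.lt_or_ge s.card 1 with hc0 | hc1
      · have hse : s = ∅ := Finset.card_eq_zero.mp (by omega)
        have : hs s = fun _ => (Matrix.of N0).det := by
          funext w; simp [hhs, hse]
        rw [this, fderiv_fun_const]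
        rfl
      · obtain ⟨i0, hi0⟩ := Finset.card_eq_one.mp (le_antisymm (by omega) hc1)
        have : hs s = fun _ => (0 : ℂ) := by
          funext w
          apply aux_det_eq_zero_of_rows _ W i0
          · intro l hl
            have hls : l ∉ s := by simp [hi0, hl]
            have : (Matrix.of fun i j => if i ∈ s then M i j w - N0 i j else N0 i j) l
                = fun j => N0 l j := by
              funext j; simp [hls]
            rw [this]
            exact hrow l
          · omega
        rw [this]
        exact fderiv_const_apply 0
    · obtain ⟨i₁, hi₁, i₂, hi₂, h12⟩ := Finset.one_lt_card.mp hc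
      have hdet : hs s = fun w => ∑ σ : Equiv.Perm (Fin n),
          ((Equiv.Perm.sign σ : ℤ) : ℂ) *
            ∏ i, (if σ i ∈ s then M (σ i) i w - N0 (σ i) i else N0 (σ i) i) := by
        funext w; simp only [hhs]; rw [Matrix.det_apply']; rfl
      have hvana : ∀ (r c : Fin n), AnalyticAt ℂ
          (fun w => if r ∈ s then M r c w - N0 r c else N0 r c) x := by
        intro r c
        by_cases h : r ∈ s
        · simpa [h] using (show AnalyticAt ℂ (fun w => M r c w - N0 r c) x from (hM r c).sub analyticAt_const)
        · simpa [h] using (analyticAt_const : AnalyticAt ℂ (fun _ : E => N0 r c) x)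
      rw [hdet]
      rw [fderiv_fun_sum (fun (σ : Equiv.Perm (Fin n)) _ => (show AnalyticAt ℂ (fun w =>
        ((Equiv.Perm.sign σ : ℤ) : ℂ) * ∏ i, (if σ i ∈ s then M (σ i) i w - N0 (σ i) i else N0 (σ i) i)) x
        from analyticAt_const.mul
        (Finset.analyticAt_fun_prod _ fun i _ => hvana (σ i) i)).differentiableAt)]
      apply Finset.sum_eq_zero
      intro σ _
      rw [fderiv_const_mul (Finset.analyticAt_fun_prod Finset.univ
        (fun i _ => hvana (σ i) i)).differentiableAt]
      have hprod : fderiv ℂ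
          (fun w => ∏ i, (if σ i ∈ s then M (σ i) i w - N0 (σ i) i else N0 (σ i) i)) x = 0 := by
        apply aux_fderiv_prod_zero
          (fun i w => if σ i ∈ s then M (σ i) i w - N0 (σ i) i else N0 (σ i) i)
          (fun i => hvana (σ i) i) (i₁ := σ.symm i₁) (i₂ := σ.symm i₂)
        · intro h; exact h12 (by simpa using congrArg σ h)
        · simp [Equiv.apply_symm_apply, hi₁, hN0]
        · simp [Equiv.apply_symm_apply, hi₂, hN0]
      rw [hprod]; ext y; simp
  rw [hexp, fderiv_fun_sum (fun s _ => (hana s).differentiableAt)]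
  exact Finset.sum_eq_zero fun s _ => hzero s

lemma aux_finrank_span_rows {n p : ℕ} (T : (Fin n → ℂ) →L[ℂ] (Fin p → ℂ)) :
    Module.finrank ℂ (Submodule.span ℂ
        (Set.range fun j : Fin p => fun i => T (Pi.single i 1) j))
      = Module.finrank ℂ (LinearMap.range (T : (Fin n → ℂ) →ₗ[ℂ] (Fin p → ℂ))) := by
  set A : Matrix (Fin p) (Fin n) ℂ := Matrix.of fun j i => T (Pi.single i 1) j with hAdef
  have hA : A.mulVecLin = (T : (Fin n → ℂ) →ₗ[ℂ] (Fin p → ℂ)) := by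
    apply LinearMap.ext
    intro v
    funext j
    rw [Matrix.mulVecLin_apply]
    rw [show A.mulVec v j = ∑ i, A j i * v i from by simp [Matrix.mulVec, dotProduct]]
    rw [ContinuousLinearMap.coe_coe, aux_apply_eq_sum_single T v j]
    apply Finset.sum_congr rfl
    intro i _
    rw [mul_comm]
    rfl
  have h1 : A.rank = Module.finrank ℂ (LinearMap.range (T : (Fin n → ℂ) →ₗ[ℂ] (Fin p → ℂ))) := by
    rw [Matrix.rank, hA]
  have h2 : Aᵀ.rank = Module.finrank ℂ (Submodule.span ℂ
      (Set.range fun j : Fin p => fun i => T (Pi.single i 1) j)) := by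
    rw [Matrix.rank_eq_finrank_span_cols]
    rfl
  rw [← h2, Matrix.rank_transpose, h1]

noncomputable def psiMap (n : ℕ) :
    ((Fin n → ℂ) →L[ℂ] ℂ) →ₗ[ℂ] (((Fin n → ℂ) × (Fin n → ℂ)) →L[ℂ] ℂ) where
  toFun L := L.comp (ContinuousLinearMap.fst ℂ _ _) - L.comp (ContinuousLinearMap.snd ℂ _ _)
  map_add' L₁ L₂ := by apply ContinuousLinearMap.ext; intro w; simp; ring
  map_smul' c L := by apply ContinuousLinearMap.ext; intro w; simp; ring

lemma psiMap_inj (n : ℕ) : Function.Injective (psiMap n) := by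
  intro L₁ L₂ h
  ext v
  have := DFunLike.congr_fun h (v, 0)
  simpa [psiMap] using this

noncomputable def chiMap (n : ℕ) : (Fin n → ℂ) →ₗ[ℂ] ((Fin n → ℂ) →L[ℂ] ℂ) where
  toFun r := ∑ i, r i • (ContinuousLinearMap.proj i : (Fin n → ℂ) →L[ℂ] ℂ)
  map_add' r s := by
    rw [← Finset.sum_add_distrib]
    exact Finset.sum_congr rfl fun i _ => by
      rw [Pi.add_apply]
      exact add_smul (r i) (s i) (ContinuousLinearMap.proj i : (Fin n → ℂ) →L[ℂ] ℂ)
  map_smul' c r := by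
    simp only [Pi.smul_apply, smul_eq_mul, RingHom.id_apply]
    rw [Finset.smul_sum]
    exact Finset.sum_congr rfl fun i _ => mul_smul c (r i) _

lemma chiMap_apply {n : ℕ} (r v : Fin n → ℂ) : chiMap n r v = ∑ i, r i * v i := by
  simp [chiMap]

lemma chiMap_inj (n : ℕ) : Function.Injective (chiMap n) := by
  intro r s h
  funext l
  have := DFunLike.congr_fun h (Pi.single l 1)
  rw [chiMap_apply, chiMap_apply, aux_sum_mul_single, aux_sum_mul_single] at this
  exact this

end AuxLemmas

lemma aux_fderiv_mem_of_mem_span {E : Type*} [NormedAddCommGroup E] [NormedSpace ℂ E] {z : E}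
    (gens : Set (analyticGerms E z)) (V : Submodule ℂ (E →L[ℂ] ℂ))
    (hgens : ∀ γ ∈ gens, ∃ g : E → ℂ, AnalyticAt ℂ g z ∧
      (γ : Filter.Germ (nhds z) ℂ) = ↑g ∧ g z = 0 ∧ fderiv ℂ g z ∈ V)
    {γ : analyticGerms E z} (hγ : γ ∈ Ideal.span gens) (g : E → ℂ)
    (hrep : (γ : Filter.Germ (nhds z) ℂ) = ↑g) : fderiv ℂ g z ∈ V := by
  let P : Ideal (analyticGerms E z) :=
    { carrier := {δ | ∃ h : E → ℂ, AnalyticAt ℂ h z ∧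
        (δ : Filter.Germ (nhds z) ℂ) = ↑h ∧ h z = 0 ∧ fderiv ℂ h z ∈ V},
      zero_mem' := by
        refine ⟨fun _ => 0, analyticAt_const, ?_, rfl, ?_⟩
        · rfl
        · rw [show (fun _ : E => (0:ℂ)) = fun _ : E => (0:ℂ) from rfl, fderiv_fun_const]
          exact V.zero_mem
      add_mem' := by
        rintro a b ⟨ga, hga, hga2, hga3, hga4⟩ ⟨gb, hgb, hgb2, hgb3, hgb4⟩
        refine ⟨ga + gb, hga.add hgb, ?_, by simp [hga3, hgb3], ?_⟩
        · push_cast [hga2, hgb2]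
          rfl
        · rw [show (ga + gb) = fun w => ga w + gb w from rfl,
            fderiv_fun_add hga.differentiableAt hgb.differentiableAt]
          exact V.add_mem hga4 hgb4
      smul_mem' := by
        rintro c a ⟨ga, hga, hga2, hga3, hga4⟩
        obtain ⟨ρ, hρ, hρ2⟩ := c.2
        refine ⟨fun w => ρ w * ga w, hρ.mul hga, ?_, by simp [hga3], ?_⟩
        · show ((c * a : analyticGerms E z) : Filter.Germ (nhds z) ℂ) = _
          push_cast [hρ2, hga2]
          rfl
        · rw [fderiv_fun_mul hρ.differentiableAt hga.differentiableAt, hga3]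
          convert V.smul_mem (ρ z) hga4 using 1; ext y; simp }
  have hle : Ideal.span gens ≤ P := Ideal.span_le.mpr hgens
  obtain ⟨g', hg'1, hg'2, _, hg'4⟩ := hle hγ
  have : g =ᶠ[nhds z] g' := Filter.Germ.coe_eq.mp (hrep.symm.trans hg'2)
  rwa [this.fderiv_eq]


set_option maxHeartbeats 1000000 in
set_option synthInstance.maxHeartbeats 400000 in
/-- Let `f : (ℂⁿ,0) → (ℂᵖ,0)` be a finite holomorphic map germ with `corank f = k ≥ 2`
and `n ≤ p`. Then the embedding dimension of the double point space `D²(f) = V(I²(f))`,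
namely `2n` minus the dimension of the space of linear parts of elements of `I²(f)`,
equals `n + k`. -/
theorem edim_doublePointSpace_of_corank (n p k : ℕ) (hnp : n ≤ p) (hk2 : 2 ≤ k) (hkn : k ≤ n)
    (f : (Fin n → ℂ) → (Fin p → ℂ)) (hf : AnalyticAt ℂ f 0) (hf0 : f 0 = 0)
    (hfin : ∃ U ∈ nhds (0 : Fin n → ℂ), ∀ y : Fin p → ℂ, {x ∈ U | f x = y}.Finite)
    (hcorank : Module.finrank ℂ (LinearMap.range
        ((fderiv ℂ f 0 : (Fin n → ℂ) →L[ℂ] (Fin p → ℂ)) :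
          (Fin n → ℂ) →ₗ[ℂ] (Fin p → ℂ))) = n - k)
    (α : Fin p → Fin n → ((Fin n → ℂ) × (Fin n → ℂ)) → ℂ)
    (hα : ∀ j i, AnalyticAt ℂ (α j i) (0, 0))
    (hrelα : ∀ᶠ w : (Fin n → ℂ) × (Fin n → ℂ) in nhds (0, 0),
      ∀ j, f w.1 j - f w.2 j = ∑ i, α j i w * (w.1 i - w.2 i)) :
    (2 * n : ℤ) - Module.finrank ℂ (linearParts n (mondDoubleIdeal n p f α)) = n + k := by
  classical
  set T : (Fin n → ℂ) →L[ℂ] (Fin p → ℂ) := fderiv ℂ f 0 with hT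
  have hfd : HasFDerivAt f T 0 := hf.differentiableAt.hasFDerivAt
  -- analyticity of the component differences
  have hGa : ∀ j : Fin p,
      AnalyticAt ℂ (fun w : (Fin n → ℂ) × (Fin n → ℂ) => f w.1 j - f w.2 j) (0, 0) := by
    intro j
    have h1 : AnalyticAt ℂ (fun w : (Fin n → ℂ) × (Fin n → ℂ) => f w.1) (0, 0) :=
      AnalyticAt.comp (f := fun w : (Fin n → ℂ) × (Fin n → ℂ) => w.1)
        (x := ((0, 0) : (Fin n → ℂ) × (Fin n → ℂ))) hf analyticAt_fst
    have h2 : AnalyticAt ℂ (fun w : (Fin n → ℂ) × (Fin n → ℂ) => f w.2) (0, 0) :=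
      AnalyticAt.comp (f := fun w : (Fin n → ℂ) × (Fin n → ℂ) => w.2)
        (x := ((0, 0) : (Fin n → ℂ) × (Fin n → ℂ))) hf analyticAt_snd
    exact (((ContinuousLinearMap.proj j : (Fin p → ℂ) →L[ℂ] ℂ).analyticAt _).comp h1).sub
      (((ContinuousLinearMap.proj j : (Fin p → ℂ) →L[ℂ] ℂ).analyticAt _).comp h2)
  -- derivatives of the component differences
  have hGd : ∀ j : Fin p,
      HasFDerivAt (fun w : (Fin n → ℂ) × (Fin n → ℂ) => f w.1 j - f w.2 j)
        (psiMap n ((ContinuousLinearMap.proj j : (Fin p → ℂ) →L[ℂ] ℂ).comp T)) (0, 0) := by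
    intro j
    have ha : HasFDerivAt (fun w : (Fin n → ℂ) × (Fin n → ℂ) => f w.1)
        (T.comp (ContinuousLinearMap.fst ℂ (Fin n → ℂ) (Fin n → ℂ)))
        ((0, 0) : (Fin n → ℂ) × (Fin n → ℂ)) :=
      HasFDerivAt.comp _ hfd hasFDerivAt_fst
    have ha' : HasFDerivAt (fun w : (Fin n → ℂ) × (Fin n → ℂ) => f w.2)
        (T.comp (ContinuousLinearMap.snd ℂ (Fin n → ℂ) (Fin n → ℂ)))
        ((0, 0) : (Fin n → ℂ) × (Fin n → ℂ)) :=
      HasFDerivAt.comp _ hfd hasFDerivAt_snd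
    have hb := HasFDerivAt.comp ((0, 0) : (Fin n → ℂ) × (Fin n → ℂ))
      ((ContinuousLinearMap.proj j : (Fin p → ℂ) →L[ℂ] ℂ).hasFDerivAt) ha
    have hb' := HasFDerivAt.comp ((0, 0) : (Fin n → ℂ) × (Fin n → ℂ))
      ((ContinuousLinearMap.proj j : (Fin p → ℂ) →L[ℂ] ℂ).hasFDerivAt) ha'
    have heq : psiMap n ((ContinuousLinearMap.proj j : (Fin p → ℂ) →L[ℂ] ℂ).comp T)
        = ((ContinuousLinearMap.proj j : (Fin p → ℂ) →L[ℂ] ℂ).comp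
            (T.comp (ContinuousLinearMap.fst ℂ (Fin n → ℂ) (Fin n → ℂ))))
          - ((ContinuousLinearMap.proj j : (Fin p → ℂ) →L[ℂ] ℂ).comp
            (T.comp (ContinuousLinearMap.snd ℂ (Fin n → ℂ) (Fin n → ℂ)))) := by
      apply ContinuousLinearMap.ext; intro w; simp [psiMap]
    rw [heq]
    exact hb.sub hb'
  -- the matrix α at the origin is the Jacobian of f
  have hπ : ∀ i : Fin n,
      HasFDerivAt (fun w : (Fin n → ℂ) × (Fin n → ℂ) => w.1 i - w.2 i)
        ((ContinuousLinearMap.proj i : (Fin n → ℂ) →L[ℂ] ℂ).comp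
            (ContinuousLinearMap.fst ℂ (Fin n → ℂ) (Fin n → ℂ))
          - (ContinuousLinearMap.proj i : (Fin n → ℂ) →L[ℂ] ℂ).comp
            (ContinuousLinearMap.snd ℂ (Fin n → ℂ) (Fin n → ℂ))) ((0, 0)) := by
    intro i
    exact (HasFDerivAt.comp _ (ContinuousLinearMap.proj i :
        (Fin n → ℂ) →L[ℂ] ℂ).hasFDerivAt hasFDerivAt_fst).sub
      (HasFDerivAt.comp _ (ContinuousLinearMap.proj i :
        (Fin n → ℂ) →L[ℂ] ℂ).hasFDerivAt hasFDerivAt_snd)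
  have hα00 : ∀ (j : Fin p) (l : Fin n),
      α j l ((0, 0) : (Fin n → ℂ) × (Fin n → ℂ)) = T (Pi.single l 1) j := by
    intro j l
    have hev : (fun w : (Fin n → ℂ) × (Fin n → ℂ) => f w.1 j - f w.2 j)
        =ᶠ[nhds ((0, 0) : (Fin n → ℂ) × (Fin n → ℂ))]
        (fun w => ∑ i, α j i w * (w.1 i - w.2 i)) :=
      hrelα.mono fun w hw => hw j
    have hR := HasFDerivAt.fun_sum (u := (Finset.univ : Finset (Fin n)))
      (fun i _ => ((hα j i).differentiableAt.hasFDerivAt.mul (hπ i)))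
    have hfder := ((hGd j).fderiv).symm.trans (hev.fderiv_eq.trans hR.fderiv)
    have hval := DFunLike.congr_fun hfder ((Pi.single l 1 : Fin n → ℂ), (0 : Fin n → ℂ))
    simp only [psiMap, LinearMap.coe_mk, AddHom.coe_mk, ContinuousLinearMap.coe_sub',
      Pi.sub_apply, ContinuousLinearMap.coe_comp', Function.comp_apply,
      ContinuousLinearMap.coe_fst', ContinuousLinearMap.coe_snd',
      ContinuousLinearMap.proj_apply, ContinuousLinearMap.coe_sum',
      Finset.sum_apply, ContinuousLinearMap.add_apply, ContinuousLinearMap.coe_smul',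
      Pi.smul_apply, smul_eq_mul, Prod.fst_zero, Prod.snd_zero, Pi.zero_apply,
      map_zero, sub_zero, sub_self, zero_mul, mul_zero, add_zero, zero_add] at hval
    rw [aux_sum_mul_single (fun i => α j i ((0,0) : (Fin n → ℂ) × (Fin n → ℂ))) l] at hval
    exact hval.symm
  -- the span of the differentials of the generators
  set V : Submodule ℂ (((Fin n → ℂ) × (Fin n → ℂ)) →L[ℂ] ℂ) :=
    Submodule.span ℂ (Set.range fun j : Fin p =>
      fderiv ℂ (fun w : (Fin n → ℂ) × (Fin n → ℂ) => f w.1 j - f w.2 j) (0, 0)) with hV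
  -- the row space of the Jacobian
  set W0 : Submodule ℂ (Fin n → ℂ) :=
    Submodule.span ℂ (Set.range fun j : Fin p => fun i => T (Pi.single i 1) j) with hW0
  have hW0rank : Module.finrank ℂ W0 = n - k := by
    rw [hW0, aux_finrank_span_rows T, hcorank]
  have hn2 : 2 ≤ n := le_trans hk2 hkn
  -- rows of the minor matrices lie in W0
  have hrowmem : ∀ (j : Fin p), (fun i => T (Pi.single i 1) j) ∈ W0 :=
    fun j => Submodule.subset_span ⟨j, rfl⟩
  -- linearParts equals V
  have hLP : linearParts n (mondDoubleIdeal n p f α) = V := by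
    apply le_antisymm
    · apply Submodule.span_le.mpr
      rintro L ⟨γ, hγI, g, hg, hγg, rfl⟩
      apply aux_fderiv_mem_of_mem_span _ V ?_ hγI g hγg
      rintro δ (⟨j, hj⟩ | ⟨rows, hmono, hδ⟩)
      · exact ⟨_, hGa j, hj, by simp [hf0], Submodule.subset_span ⟨j, rfl⟩⟩
      · refine ⟨_, aux_analyticAt_det (fun i i' => α (rows i) i') (fun i i' => hα _ _),
          hδ, ?_, ?_⟩
        · apply aux_det_eq_zero_of_rows _ W0 ⟨0, by omega⟩
          · intro l _
            have : (Matrix.of fun i i' => α (rows i) i'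
                ((0, 0) : (Fin n → ℂ) × (Fin n → ℂ))) l
                = fun i' => T (Pi.single i' 1) (rows l) := funext fun i' => hα00 (rows l) i'
            rw [this]
            exact hrowmem (rows l)
          · rw [hW0rank]; omega
        · rw [aux_fderiv_det_zero (fun i i' => α (rows i) i') (fun i i' => hα _ _) W0
            (by rw [hW0rank]; omega) ?_]
          · exact V.zero_mem
          · intro i
            have : (fun i' => α (rows i) i' ((0, 0) : (Fin n → ℂ) × (Fin n → ℂ)))
                = fun i' => T (Pi.single i' 1) (rows i) := funext fun i' => hα00 (rows i) i'
            rw [this]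
            exact hrowmem (rows i)
    · rw [hV]
      apply Submodule.span_le.mpr
      rintro L ⟨j, rfl⟩
      apply Submodule.subset_span
      refine ⟨⟨((fun w : (Fin n → ℂ) × (Fin n → ℂ) => f w.1 j - f w.2 j) :
          Filter.Germ (nhds ((0, 0) : (Fin n → ℂ) × (Fin n → ℂ))) ℂ), _, hGa j, rfl⟩,
        Ideal.subset_span (Set.mem_union_left _ ⟨j, rfl⟩), _, hGa j, rfl, rfl⟩
  -- computing the dimension of V
  have hΦ : ∀ j : Fin p,
      fderiv ℂ (fun w : (Fin n → ℂ) × (Fin n → ℂ) => f w.1 j - f w.2 j) (0, 0)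
        = psiMap n (chiMap n (fun i => T (Pi.single i 1) j)) := by
    intro j
    rw [(hGd j).fderiv]
    refine congrArg (psiMap n) ?_
    symm
    apply ContinuousLinearMap.ext
    intro v
    rw [chiMap_apply]
    have : ((ContinuousLinearMap.proj j : (Fin p → ℂ) →L[ℂ] ℂ).comp T) v = T v j := rfl
    rw [this, aux_apply_eq_sum_single T v j]
    exact Finset.sum_congr rfl fun i _ => mul_comm _ _
  have hrange : (Set.range fun j : Fin p =>
      fderiv ℂ (fun w : (Fin n → ℂ) × (Fin n → ℂ) => f w.1 j - f w.2 j) (0, 0))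
      = ⇑((psiMap n).comp (chiMap n)) ''
        (Set.range fun j : Fin p => fun i => T (Pi.single i 1) j) := by
    rw [← Set.range_comp]
    exact congrArg Set.range (funext fun j => hΦ j)
  have hinj : Function.Injective ((psiMap n).comp (chiMap n)) := by
    rw [LinearMap.coe_comp]
    exact (psiMap_inj n).comp (chiMap_inj n)
  have hVrank : Module.finrank ℂ V = n - k := by
    rw [hV, hrange, ← Submodule.map_span]
    rw [← hW0]
    rw [← LinearEquiv.finrank_eq (Submodule.equivMapOfInjective
      ((psiMap n).comp (chiMap n)) hinj W0)]
    exact hW0rank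
  rw [hLP, hVrank]
  omega
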